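/- Let d ∈ ℕ, c ≥ 0, m ∈ ℕ₀, ε > 0, C > 0, R > e_m, and define ψ^u_{c,m}(x) := |x|^{-c/2-d/2-ε/2} if m = 0 and ψ^u_{c,m}(x) := |x|^{-c/2-d/2} ∏_{j=1}^m (ln_j(|x|))^{-1/2} (ln_m(|x|))^{-ε/2} if m ≥ 1. If ψ ∈ L²(ℝ^d) satisfies |ψ(x)| ≤ C ψ^u_{c,m}(x) for almost every |x| > R, then ∫_{ℝ^d} |x|^{c̃} |ψ(x)|² dx < ∞ for every c̃ with 0 ≤ c̃ ≤ c. -/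

import Mathlib

open MeasureTheory Real Filter Finset
open scoped RealInnerProductSpace ENNReal Topology

/-- Iterated exponential: `iterExp 0 = 0`, `iterExp (n+1) = exp (iterExp n)`
(the `e_n` of the paper). -/
noncomputable def iterExp : ℕ → ℝ
  | 0 => 0
  | n + 1 => Real.exp (iterExp n)

/-- Iterated logarithm: `iterLog 1 r = log r`, `iterLog (n+1) r = log (iterLog n r)`
(the `ln_n` of the paper). -/
noncomputable def iterLog : ℕ → ℝ → ℝ
  | 0, r => r
  | n + 1, r => Real.log (iterLog n r)

/-- `ψᵘ_{c,m}` : for `m = 0` it is `|x|^{-c/2-d/2-ε/2}`, and for `m ≥ 1` it is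
`|x|^{-c/2-d/2} ∏_{j=1}^m (ln_j |x|)^{-1/2} · (ln_m |x|)^{-ε/2}`. -/
noncomputable def psiU (d : ℕ) (c ε : ℝ) (m : ℕ) (x : EuclideanSpace ℝ (Fin d)) : ℝ :=
  if m = 0 then ‖x‖ ^ (-(c / 2) - (d : ℝ) / 2 - ε / 2)
  else ‖x‖ ^ (-(c / 2) - (d : ℝ) / 2) * (∏ j ∈ Finset.Icc 1 m, (iterLog j ‖x‖) ^ (-(1 : ℝ) / 2))
        * (iterLog m ‖x‖) ^ (-(ε / 2))

lemma iterExp_nonneg (n : ℕ) : 0 ≤ iterExp n := by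
  cases n with
  | zero => simp [iterExp]
  | succ n => exact (Real.exp_pos _).le

lemma iterExp_lt_succ (n : ℕ) : iterExp n < iterExp (n + 1) := by
  have := Real.add_one_le_exp (iterExp n)
  simp only [iterExp]
  linarith

lemma iterLog_gt {m j : ℕ} (hj : j ≤ m) {r : ℝ} (hr : iterExp m < r) :
    iterExp (m - j) < iterLog j r := by
  induction j with
  | zero => simpa [iterLog] using hr
  | succ j ih =>
    have hj' : j ≤ m := Nat.le_of_succ_le hj
    have h1 : iterExp (m - j) < iterLog j r := ih hj'
    have hmj : m - j = (m - (j + 1)) + 1 := by omega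
    have : Real.log (iterExp (m - j)) < Real.log (iterLog j r) := by
      apply Real.log_lt_log _ h1
      rw [hmj]; exact Real.exp_pos _
    simpa [iterLog, hmj, iterExp, Real.log_exp] using this

lemma iterLog_pos {m j : ℕ} (hj : j ≤ m) {r : ℝ} (hr : iterExp m < r) :
    0 < iterLog j r :=
  lt_of_le_of_lt (iterExp_nonneg _) (iterLog_gt hj hr)

lemma measurable_iterLog (n : ℕ) : Measurable (iterLog n) := by
  induction n with
  | zero => exact measurable_id
  | succ n ih => exact Real.measurable_log.comp ih

lemma iterLog_tendsto (n : ℕ) : Tendsto (iterLog n) atTop atTop := by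
  induction n with
  | zero => exact tendsto_id
  | succ n ih => exact Real.tendsto_log_atTop.comp ih

lemma hasDerivAt_iterLog (n : ℕ) {r : ℝ} (hr : iterExp n < r) :
    HasDerivAt (iterLog n) (∏ j ∈ Finset.range n, (iterLog j r)⁻¹) r := by
  induction n with
  | zero => simpa [iterLog] using (hasDerivAt_id' r)
  | succ n ih =>
    have hn : iterExp n < r := lt_trans (iterExp_lt_succ n) hr
    have hpos : 0 < iterLog n r := iterLog_pos (Nat.le_succ n) hr
    have := (ih hn).log hpos.ne'
    have heq : (∏ j ∈ Finset.range n, (iterLog j r)⁻¹) / iterLog n r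
        = ∏ j ∈ Finset.range (n + 1), (iterLog j r)⁻¹ := by
      rw [Finset.prod_range_succ, div_eq_mul_inv]
    rw [heq] at this
    exact this

lemma integrable_fun_norm {d : ℕ} (hd : 0 < d) {f : ℝ → ℝ}
    (hint : IntegrableOn (fun r : ℝ => r ^ (d - 1) * f r) (Set.Ioi (0:ℝ)) volume) :
    Integrable (fun x : EuclideanSpace ℝ (Fin d) => f ‖x‖) volume := by
  haveI : Nonempty (Fin d) := ⟨⟨0, hd⟩⟩
  haveI : Nontrivial (EuclideanSpace ℝ (Fin d)) := inferInstance
  set E := EuclideanSpace ℝ (Fin d) with hE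
  have hdim : Module.finrank ℝ E = d := finrank_euclideanSpace_fin
  have hA : Integrable (fun r : Set.Ioi (0:ℝ) => f r.1)
      (Measure.volumeIoiPow (Module.finrank ℝ E - 1)) := by
    rw [Measure.volumeIoiPow, integrable_withDensity_iff (by fun_prop) (by
      filter_upwards with r using ENNReal.ofReal_lt_top)]
    have hcomp : Integrable ((fun r : ℝ => r ^ (d - 1) * f r) ∘ (Subtype.val : Set.Ioi (0:ℝ) → ℝ))
        (Measure.comap Subtype.val (volume : Measure ℝ)) := by
      rw [← MeasurableEmbedding.integrable_map_iff
        (MeasurableEmbedding.subtype_coe measurableSet_Ioi),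
        map_comap_subtype_coe measurableSet_Ioi]
      exact hint
    refine hcomp.congr ?_
    filter_upwards with r
    have hr : (0:ℝ) < r.1 := r.2
    simp [Function.comp, hdim, ENNReal.toReal_ofReal (pow_nonneg hr.le _), mul_comm]
  have hB : Integrable (fun p : Metric.sphere (0:E) 1 × Set.Ioi (0:ℝ) => f p.2.1)
      ((volume : Measure E).toSphere.prod (Measure.volumeIoiPow (Module.finrank ℝ E - 1))) := by
    have := (integrable_const (μ := (volume : Measure E).toSphere) (1:ℝ)).smul_prod hA
    simpa using this
  have hC := ((volume : Measure E).measurePreserving_homeomorphUnitSphereProd.integrable_comp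
    hB.aestronglyMeasurable).mpr hB
  have hC' : Integrable (fun x : ({0}ᶜ : Set E) => f ‖x.1‖)
      ((volume : Measure E).comap Subtype.val) := by
    refine hC.congr ?_
    filter_upwards with x
    simp [Function.comp]
  have h0 : MeasurableSet ({0}ᶜ : Set E) := (measurableSet_singleton 0).compl
  have := (MeasurableEmbedding.integrable_map_iff
      (MeasurableEmbedding.subtype_coe h0) (g := fun x : EuclideanSpace ℝ (Fin d) => f ‖x‖)).mpr hC'
  rw [map_comap_subtype_coe h0, MeasureTheory.restrict_compl_singleton] at this
  exact this

lemma integrableOn_iterLog_deriv {m : ℕ} {ε R : ℝ} (hε : 0 < ε) (hR : iterExp m < R) :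
    IntegrableOn
      (fun r : ℝ => (∏ j ∈ Finset.range m, (iterLog j r)⁻¹) * iterLog m r ^ (-ε - 1))
      (Set.Ioi R) volume := by
  have hg : ∀ r ∈ Set.Ici R, HasDerivAt (fun r => -ε⁻¹ * iterLog m r ^ (-ε))
      ((∏ j ∈ Finset.range m, (iterLog j r)⁻¹) * iterLog m r ^ (-ε - 1)) r := by
    intro r hr
    have hrm : iterExp m < r := lt_of_lt_of_le hR hr
    have hL : 0 < iterLog m r := iterLog_pos le_rfl hrm
    have h1 := ((hasDerivAt_iterLog m hrm).rpow_const (p := -ε) (Or.inl hL.ne')).const_mul (-ε⁻¹)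
    convert h1 using 1
    · rfl
    · rfl
    have hε0 : ε ≠ 0 := hε.ne'
    field_simp
  apply integrableOn_Ioi_deriv_of_nonneg
    ((hg R Set.self_mem_Ici).continuousAt.continuousWithinAt)
    (fun r hr => hg r (Set.mem_Ici_of_Ioi hr))
  · intro r hr
    have hrm : iterExp m < r := lt_trans hR hr
    have hL : 0 < iterLog m r := iterLog_pos le_rfl hrm
    have : ∀ j ∈ Finset.range m, 0 ≤ (iterLog j r)⁻¹ := fun j hj =>
      (inv_pos.mpr (iterLog_pos (Finset.mem_range.mp hj).le hrm)).le
    exact mul_nonneg (Finset.prod_nonneg this) (Real.rpow_nonneg hL.le _)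
  · have := ((tendsto_rpow_neg_atTop hε).comp (iterLog_tendsto m)).const_mul (-ε⁻¹)
    simpa using this

lemma sq_rpow' {y : ℝ} (hy : 0 ≤ y) (p : ℝ) : (y ^ p) ^ 2 = y ^ (2 * p) := by
  rw [← Real.rpow_natCast (y ^ p) 2, ← Real.rpow_mul hy]
  norm_num [mul_comm]

lemma prod_range_succ_inv (m : ℕ) (r : ℝ) :
    ∏ j ∈ Finset.range (m + 1), (iterLog j r)⁻¹
      = r⁻¹ * ∏ j ∈ Finset.Icc 1 m, (iterLog j r)⁻¹ := by
  rw [Finset.range_eq_Ico, Finset.prod_eq_prod_Ico_succ_bot (Nat.succ_pos m),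
    Nat.succ_eq_add_one, Finset.Ico_add_one_right_eq_Icc]
  rfl

/-- If `ψ ∈ L²(ℝ^d)` and `|ψ(x)| ≤ C ψᵘ_{c,m}(x)` for a.e. `|x| > R`, then `ψ` has
finite `c̃`-th moment for every `0 ≤ c̃ ≤ c`. -/
theorem moment_finite_of_upper_bound (d : ℕ) (hd : 0 < d) (c : ℝ) (hc : 0 ≤ c)
    (m : ℕ) (ε : ℝ) (hε : 0 < ε) (C : ℝ) (hC : 0 < C) (R : ℝ) (hR : iterExp m < R)
    (ψ : EuclideanSpace ℝ (Fin d) → ℝ) (hψ : MemLp ψ 2 volume)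
    (hbd : ∀ᵐ x ∂(volume : Measure (EuclideanSpace ℝ (Fin d))),
      R < ‖x‖ → |ψ x| ≤ C * psiU d c ε m x) :
    ∀ ct : ℝ, 0 ≤ ct → ct ≤ c →
      Integrable (fun x : EuclideanSpace ℝ (Fin d) => ‖x‖ ^ ct * (ψ x) ^ 2) := by
  intro ct hct0 hctc
  set R' : ℝ := max R 1 with hR'def
  have hRR' : R ≤ R' := le_max_left _ _
  have hR'1 : (1:ℝ) ≤ R' := le_max_right _ _
  have hR'm : iterExp m < R' := lt_of_lt_of_le hR hRR'
  have hR'0 : (0:ℝ) < R' := lt_of_lt_of_le one_pos hR'1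
  -- the dominating profile
  set H : ℝ → ℝ := fun r => if R' < r then
      r ^ (-(d:ℝ)) * ((∏ j ∈ Finset.Icc 1 m, (iterLog j r)⁻¹) * iterLog m r ^ (-ε)) else 0
    with hHdef
  -- integrability of the dominating function
  have hHint : Integrable (fun x : EuclideanSpace ℝ (Fin d) => H ‖x‖) volume := by
    apply integrable_fun_norm hd
    have hsplit : Set.Ioi (0:ℝ) = Set.Ioc 0 R' ∪ Set.Ioi R' :=
      (Set.Ioc_union_Ioi_eq_Ioi hR'0.le).symm
    rw [hsplit]
    apply IntegrableOn.union
    · -- zero on Ioc 0 R'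
      apply (integrable_zero _ _ _).congr
      filter_upwards [ae_restrict_mem measurableSet_Ioc] with r hr
      rw [hHdef]
      simp only [if_neg (not_lt.mpr hr.2), mul_zero, Pi.zero_apply]
    · -- equal to the derivative on Ioi R'
      apply (integrableOn_iterLog_deriv hε hR'm).congr_fun ?_ measurableSet_Ioi
      intro r hr
      have hrR' : R' < r := hr
      have hr1 : (1:ℝ) < r := lt_of_le_of_lt hR'1 hrR'
      have hr0 : (0:ℝ) < r := lt_trans one_pos hr1
      have hrm : iterExp m < r := lt_trans hR'm hrR'
      have hL : 0 < iterLog m r := iterLog_pos le_rfl hrm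
      have hpow : (r:ℝ) ^ (d - 1) * r ^ (-(d:ℝ)) = r⁻¹ := by
        rw [← Real.rpow_natCast r (d - 1), ← Real.rpow_add hr0, ← Real.rpow_neg_one]
        congr 1
        rw [Nat.cast_sub hd]
        push_cast
        ring
      have hLsplit : iterLog m r ^ (-ε - 1) = (iterLog m r)⁻¹ * iterLog m r ^ (-ε) := by
        rw [show -ε - 1 = -1 + -ε by ring, Real.rpow_add hL, Real.rpow_neg_one]
      rw [hHdef]
      simp only [if_pos hrR']
      rw [hLsplit, ← mul_assoc, ← mul_assoc, hpow, ← Finset.prod_range_succ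
        (fun j => (iterLog j r)⁻¹), prod_range_succ_inv]
      ring
  -- measurability of the target function
  have hmψ := hψ.aestronglyMeasurable
  have hmf : AEStronglyMeasurable (fun x : EuclideanSpace ℝ (Fin d) => ‖x‖ ^ ct * (ψ x) ^ 2) volume := by
    apply AEStronglyMeasurable.mul
    · exact ((Real.continuous_rpow_const hct0).comp continuous_norm).aestronglyMeasurable
    · exact (hmψ.mul hmψ).congr (by filter_upwards with x; simp [Pi.mul_apply, sq])
  have hψ2 : Integrable (fun x : EuclideanSpace ℝ (Fin d) => ψ x ^ 2) volume := hψ.integrable_sq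
  -- split
  rw [← integrableOn_univ, ← Set.union_compl_self (Metric.closedBall (0:EuclideanSpace ℝ (Fin d)) R')]
  apply IntegrableOn.union
  · -- inner part
    apply Integrable.mono' ((hψ2.const_mul (R' ^ ct)).restrict) hmf.restrict
    filter_upwards [ae_restrict_mem measurableSet_closedBall] with x hx
    have hxR : ‖x‖ ≤ R' := by simpa [mem_closedBall_zero_iff] using hx
    have h1 : ‖x‖ ^ ct ≤ R' ^ ct := Real.rpow_le_rpow (norm_nonneg x) hxR hct0
    have h2 : (0:ℝ) ≤ ψ x ^ 2 := sq_nonneg _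
    rw [Real.norm_eq_abs, abs_of_nonneg (mul_nonneg (Real.rpow_nonneg (norm_nonneg x) ct) h2)]
    exact mul_le_mul_of_nonneg_right h1 h2
  · -- outer part
    apply Integrable.mono' (((hHint.const_mul (C ^ 2))).restrict) hmf.restrict
    have hcompl : ∀ x : EuclideanSpace ℝ (Fin d), x ∈ (Metric.closedBall (0:EuclideanSpace ℝ (Fin d)) R')ᶜ → R' < ‖x‖ := by
      intro x hx
      simpa [mem_closedBall_zero_iff, not_le] using hx
    filter_upwards [ae_restrict_mem measurableSet_closedBall.compl, ae_restrict_of_ae hbd]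
      with x hx hbx
    have hxR' : R' < ‖x‖ := hcompl x hx
    have hxR : R < ‖x‖ := lt_of_le_of_lt hRR' hxR'
    have hb : |ψ x| ≤ C * psiU d c ε m x := hbx hxR
    set r : ℝ := ‖x‖ with hrdef
    have hr1 : (1:ℝ) < r := lt_of_le_of_lt hR'1 hxR'
    have hr0 : (0:ℝ) < r := lt_trans one_pos hr1
    have hrm : iterExp m < r := lt_trans hR'm hxR'
    have hLm : 0 < iterLog m r := iterLog_pos le_rfl hrm
    have hLpos : ∀ j ∈ Finset.Icc 1 m, 0 < iterLog j r := fun j hj =>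
      iterLog_pos (Finset.mem_Icc.mp hj).2 hrm
    -- unified form of psiU
    have hpsi : psiU d c ε m x = r ^ (-(c/2) - (d:ℝ)/2)
        * (∏ j ∈ Finset.Icc 1 m, (iterLog j r) ^ (-(1:ℝ)/2)) * (iterLog m r) ^ (-(ε/2)) := by
      simp only [psiU]
      split_ifs with h
      · subst h
        rw [Finset.Icc_eq_empty (by omega : ¬(1:ℕ) ≤ 0), Finset.prod_empty, mul_one,
          show iterLog 0 ‖x‖ = ‖x‖ from rfl,
          show (-(c/2) - (d:ℝ)/2 - ε/2) = (-(c/2) - (d:ℝ)/2) + (-(ε/2)) by ring,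
          Real.rpow_add hr0]
      · rfl
    have hpsinonneg : 0 ≤ psiU d c ε m x := by
      rw [hpsi]
      have h1 : (0:ℝ) ≤ r ^ (-(c/2) - (d:ℝ)/2) := Real.rpow_nonneg hr0.le _
      have h2 : (0:ℝ) ≤ ∏ j ∈ Finset.Icc 1 m, (iterLog j r) ^ (-(1:ℝ)/2) :=
        Finset.prod_nonneg fun j hj => Real.rpow_nonneg (hLpos j hj).le _
      have h3 : (0:ℝ) ≤ (iterLog m r) ^ (-(ε/2)) := Real.rpow_nonneg hLm.le _
      positivity
    -- squared bound
    have hsq : psiU d c ε m x ^ 2 = r ^ (-c - (d:ℝ))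
        * (∏ j ∈ Finset.Icc 1 m, (iterLog j r)⁻¹) * (iterLog m r) ^ (-ε) := by
      rw [hpsi, mul_pow, mul_pow, sq_rpow' hr0.le, sq_rpow' hLm.le, ← Finset.prod_pow]
      congr 2
      · congr 1; ring
      · exact Finset.prod_congr rfl fun j hj => by
          rw [sq_rpow' (hLpos j hj).le]
          norm_num [Real.rpow_neg_one]
      · congr 1; ring
    -- final chain
    have hψsq : ψ x ^ 2 ≤ (C * psiU d c ε m x) ^ 2 := by
      rw [← sq_abs (ψ x)]
      exact pow_le_pow_left₀ (abs_nonneg _) hb 2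
    have hstep1 : ‖x‖ ^ ct * ψ x ^ 2 ≤ C ^ 2 * (r ^ ct * psiU d c ε m x ^ 2) := by
      calc ‖x‖ ^ ct * ψ x ^ 2 ≤ ‖x‖ ^ ct * (C * psiU d c ε m x) ^ 2 :=
            mul_le_mul_of_nonneg_left hψsq (Real.rpow_nonneg (norm_nonneg x) ct)
        _ = C ^ 2 * (r ^ ct * psiU d c ε m x ^ 2) := by rw [← hrdef]; ring
    have hstep2 : r ^ ct * psiU d c ε m x ^ 2 ≤ H r := by
      rw [hsq, hHdef]
      simp only [if_pos hxR']
      have hprodnonneg : (0:ℝ) ≤ (∏ j ∈ Finset.Icc 1 m, (iterLog j r)⁻¹)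
          * (iterLog m r) ^ (-ε) :=
        mul_nonneg (Finset.prod_nonneg fun j hj => (inv_pos.mpr (hLpos j hj)).le)
          (Real.rpow_nonneg hLm.le _)
      have hexp : r ^ ct * r ^ (-c - (d:ℝ)) ≤ r ^ (-(d:ℝ)) := by
        rw [← Real.rpow_add hr0]
        exact Real.rpow_le_rpow_of_exponent_le hr1.le (by linarith)
      calc r ^ ct * (r ^ (-c - (d:ℝ)) * (∏ j ∈ Finset.Icc 1 m, (iterLog j r)⁻¹)
              * (iterLog m r) ^ (-ε))
          = (r ^ ct * r ^ (-c - (d:ℝ))) * ((∏ j ∈ Finset.Icc 1 m, (iterLog j r)⁻¹)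
              * (iterLog m r) ^ (-ε)) := by ring
        _ ≤ r ^ (-(d:ℝ)) * ((∏ j ∈ Finset.Icc 1 m, (iterLog j r)⁻¹)
              * (iterLog m r) ^ (-ε)) := mul_le_mul_of_nonneg_right hexp hprodnonneg
    rw [Real.norm_eq_abs,
      abs_of_nonneg (mul_nonneg (Real.rpow_nonneg (norm_nonneg x) ct) (sq_nonneg _))]
    calc ‖x‖ ^ ct * ψ x ^ 2 ≤ C ^ 2 * (r ^ ct * psiU d c ε m x ^ 2) := hstep1
      _ ≤ C ^ 2 * H r := mul_le_mul_of_nonneg_left hstep2 (sq_nonneg C)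
      _ = C ^ 2 * H ‖x‖ := by rw [hrdef]
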